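/- There exists a constant C > 0 such that for every integer n ≥ 1, | α_n − 4π log 2 | ≤ C / n, where α_n := Σ_{k ∈ ℤ³∖{0}, n ≤ |k| ≤ 2n} |k|^{−3}. In particular α_n = 4π log 2 + O(n^{−1}) as n → ∞. -/

import Mathlib

noncomputable section

/-- Euclidean norm of a lattice point `k ∈ ℤ³`, viewed as a vector of `ℝ³`. -/
def znorm3 (k : Fin 3 → ℤ) : ℝ := Real.sqrt (∑ i, ((k i : ℝ)) ^ 2)

open scoped Classical in
/-- `α_n = Σ_{k ∈ ℤ³∖{0}, n ≤ |k| ≤ 2n} |k|⁻³`, written as a `tsum` over all of `ℤ³`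
of a function supported on the (finite) spherical shell `n ≤ |k| ≤ 2n`. -/
def alphaSeq (n : ℕ) : ℝ :=
  ∑' k : Fin 3 → ℤ,
    if k ≠ 0 ∧ (n : ℝ) ≤ znorm3 k ∧ znorm3 k ≤ 2 * n then 1 / znorm3 k ^ 3 else 0

open MeasureTheory Metric Real Set intervalIntegral
open scoped Interval

namespace AlphaAux

/- ### Basic facts about `√3` -/

lemma sqrt3_lt_two : Real.sqrt 3 < 2 := by
  nlinarith [Real.sq_sqrt (by norm_num : (0:ℝ) ≤ 3), Real.sqrt_nonneg 3]

lemma one_le_sqrt3 : 1 ≤ Real.sqrt 3 := by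
  nlinarith [Real.sq_sqrt (by norm_num : (0:ℝ) ≤ 3), Real.sqrt_nonneg 3]

lemma sq_sqrt3 : Real.sqrt 3 ^ 2 = 3 := Real.sq_sqrt (by norm_num)

lemma log2le : Real.log 2 ≤ 1 := by
  have := Real.log_le_sub_one_of_pos (by norm_num : (0:ℝ) < 2); linarith

/- ### Lattice points, cubes, the shell -/

abbrev E3 := EuclideanSpace ℝ (Fin 3)

def toE (k : Fin 3 → ℤ) : E3 := WithLp.toLp 2 (fun i => (k i : ℝ))

def cube (k : Fin 3 → ℤ) : Set E3 := {x | ∀ i, (k i : ℝ) ≤ x i ∧ x i < (k i : ℝ) + 1}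

lemma znorm_eq (k : Fin 3 → ℤ) : znorm3 k = ‖toE k‖ := by
  rw [znorm3, EuclideanSpace.norm_eq]
  congr 1
  refine Finset.sum_congr rfl fun i _ => ?_
  rw [Real.norm_eq_abs, sq_abs]; rfl

lemma cube_eq (k : Fin 3 → ℤ) :
    cube k = ⋂ i, (fun x : E3 => x i) ⁻¹' Ico (k i : ℝ) ((k i : ℝ) + 1) := by
  ext x; simp [cube, Set.mem_iInter, Set.mem_Ico]

lemma meas_eval (i : Fin 3) : Measurable (fun x : E3 => x i) :=
  (EuclideanSpace.proj i).continuous.measurable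

lemma cube_measurable (k : Fin 3 → ℤ) : MeasurableSet (cube k) := by
  rw [cube_eq]
  exact MeasurableSet.iInter fun i => meas_eval i measurableSet_Ico

lemma cube_volume (k : Fin 3 → ℤ) : volume (cube k) = 1 := by
  have hp := EuclideanSpace.volume_preserving_symm_measurableEquiv_toLp (Fin 3)
  have hs : cube k = (MeasurableEquiv.toLp 2 (Fin 3 → ℝ)).symm ⁻¹'
      (Set.univ.pi fun i => Ico (k i : ℝ) ((k i : ℝ) + 1)) := by
    ext x
    simp [cube, Set.mem_pi]
  rw [hs, hp.measure_preimage (MeasurableSet.univ_pi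
      (fun i => measurableSet_Ico)).nullMeasurableSet]
  rw [volume_pi_pi]
  simp

lemma cube_pairwise_disjoint {k l : Fin 3 → ℤ} (h : k ≠ l) : Disjoint (cube k) (cube l) := by
  rw [Set.disjoint_left]
  intro x hk hl
  apply h
  funext i
  have h1 := hk i; have h2 := hl i
  have : (k i : ℝ) = l i := by
    have e1 : k i = ⌊x i⌋ := by
      symm; rw [Int.floor_eq_iff]; exact ⟨h1.1, h1.2⟩
    have e2 : l i = ⌊x i⌋ := by
      symm; rw [Int.floor_eq_iff]; exact ⟨h2.1, h2.2⟩
    rw [e1, e2]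
  exact_mod_cast this

lemma mem_cube_floor (x : E3) : x ∈ cube (fun i => ⌊x i⌋) :=
  fun i => ⟨Int.floor_le _, Int.lt_floor_add_one _⟩

lemma norm_sub_cube {k : Fin 3 → ℤ} {x : E3} (hx : x ∈ cube k) :
    ‖x - toE k‖ ≤ Real.sqrt 3 := by
  rw [EuclideanSpace.norm_eq]
  apply Real.sqrt_le_sqrt
  have hb : ∀ i, ‖(x - toE k) i‖ ^ 2 ≤ 1 := by
    intro i
    have h := hx i
    have he : (x - toE k) i = x i - (k i : ℝ) := rfl
    rw [he, Real.norm_eq_abs, sq_abs]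
    nlinarith [h.1, h.2]
  calc ∑ i, ‖(x - toE k) i‖ ^ 2 ≤ ∑ _i : Fin 3, (1:ℝ) :=
        Finset.sum_le_sum fun i _ => hb i
    _ = 3 := by simp

open scoped Classical in
def shell (n : ℕ) : Finset (Fin 3 → ℤ) :=
  (Finset.Icc (fun _ => -(2*(n:ℤ))) (fun _ => 2*(n:ℤ))).filter
    (fun k => k ≠ 0 ∧ (n : ℝ) ≤ znorm3 k ∧ znorm3 k ≤ 2 * n)

lemma coord_le {k : Fin 3 → ℤ} {b : ℝ} (hb : 0 ≤ b) (h : znorm3 k ≤ b) (i : Fin 3) :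
    |(k i : ℝ)| ≤ b := by
  unfold znorm3 at h
  have h1 : ((k i : ℝ))^2 ≤ ∑ j, ((k j : ℝ))^2 :=
    Finset.single_le_sum (f := fun j => ((k j : ℝ))^2) (fun j _ => sq_nonneg _)
      (Finset.mem_univ i)
  have h2 : ∑ j, ((k j : ℝ))^2 ≤ b^2 := by
    have hS : 0 ≤ ∑ j, ((k j : ℝ))^2 := Finset.sum_nonneg fun j _ => sq_nonneg _
    have := Real.sq_sqrt hS
    nlinarith [Real.sqrt_nonneg (∑ j, ((k j : ℝ))^2)]
  nlinarith [abs_nonneg ((k i : ℝ)), sq_abs ((k i:ℝ))]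

lemma mem_shell_iff {n : ℕ} {k : Fin 3 → ℤ} :
    k ∈ shell n ↔ (k ≠ 0 ∧ (n : ℝ) ≤ znorm3 k ∧ znorm3 k ≤ 2 * n) := by
  classical
  rw [shell, Finset.mem_filter, and_iff_right_iff_imp]
  rintro ⟨-, -, h2⟩
  rw [Finset.mem_Icc]
  have hb : (0:ℝ) ≤ 2 * n := by positivity
  constructor <;> intro i
  all_goals {
    have hci := coord_le hb h2 i
    have h3 : |k i| ≤ 2 * (n:ℤ) := by
      have : |(k i : ℝ)| ≤ ((2 * n : ℤ) : ℝ) := by push_cast; exact hci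
      exact_mod_cast (abs_le.mpr (abs_le.mp this))
    have := abs_le.mp h3
    simp only []
    omega }

open scoped Classical in
lemma alphaSeq_eq (n : ℕ) :
    alphaSeq n = ∑ k ∈ shell n, (znorm3 k ^ 3)⁻¹ := by
  rw [alphaSeq, tsum_eq_sum (s := shell n) ?h]
  · refine Finset.sum_congr rfl fun k hk => ?_
    rw [if_pos (mem_shell_iff.mp hk), one_div]
  · intro k hk
    rw [if_neg]
    exact fun h => hk (mem_shell_iff.mpr h)

lemma alphaSeq_nonneg (n : ℕ) : 0 ≤ alphaSeq n := by
  classical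
  rw [alphaSeq]
  apply tsum_nonneg
  intro k
  by_cases h : k ≠ 0 ∧ (n : ℝ) ≤ znorm3 k ∧ znorm3 k ≤ 2 * n
  · rw [if_pos h]
    have : 0 ≤ znorm3 k := Real.sqrt_nonneg _
    positivity
  · rw [if_neg h]

/- ### Crude upper bound -/

lemma shell_card (n : ℕ) : (shell n).card ≤ (4*n+1)^3 := by
  classical
  calc (shell n).card ≤ (Finset.Icc (fun _ : Fin 3 => -(2*(n:ℤ))) (fun _ => 2*(n:ℤ))).card :=
        Finset.card_filter_le _ _
    _ = (4*n+1)^3 := by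
      rw [Pi.card_Icc]
      simp [Int.card_Icc]
      omega

lemma alphaSeq_le_125 {n : ℕ} (hn : 1 ≤ n) : alphaSeq n ≤ 125 := by
  rw [alphaSeq_eq]
  have hn' : (0:ℝ) < n := by exact_mod_cast hn
  have hz : ∀ k ∈ shell n, (znorm3 k ^3)⁻¹ ≤ ((n:ℝ)^3)⁻¹ := by
    intro k hk
    obtain ⟨-, hl, -⟩ := mem_shell_iff.mp hk
    exact inv_anti₀ (by positivity) (pow_le_pow_left₀ hn'.le hl 3)
  calc ∑ k ∈ shell n, (znorm3 k ^ 3)⁻¹ ≤ ∑ _k ∈ shell n, ((n:ℝ)^3)⁻¹ :=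
        Finset.sum_le_sum hz
    _ = (shell n).card * ((n:ℝ)^3)⁻¹ := by rw [Finset.sum_const, nsmul_eq_mul]
    _ ≤ ((4*n+1)^3 : ℕ) * ((n:ℝ)^3)⁻¹ := by
        gcongr
        exact_mod_cast shell_card n
    _ ≤ 125 := by
        rw [← div_eq_mul_inv, div_le_iff₀ (by positivity)]
        push_cast
        have h1 : (n:ℝ) ≥ 1 := by exact_mod_cast hn
        have h45 : 4*(n:ℝ)+1 ≤ 5*n := by linarith
        calc (4*(n:ℝ)+1)^3 ≤ (5*n)^3 := pow_le_pow_left₀ (by positivity) h45 3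
          _ = 125 * n^3 := by ring

/- ### The radial integration formula -/

lemma vol_ball : (volume (ball (0:E3) 1)).toReal = 4 * π / 3 := by
  rw [EuclideanSpace.volume_ball]
  have h32 : Gamma ((3:ℝ)/2) = Real.sqrt π / 2 := by
    have := Real.Gamma_add_one (s := 1/2) (by norm_num)
    rw [show (3:ℝ)/2 = 1/2 + 1 by norm_num, this, Real.Gamma_one_half_eq]; ring
  have h52 : Gamma ((3:ℝ)/2 + 1) = 3 * Real.sqrt π / 4 := by
    rw [Real.Gamma_add_one (by norm_num), h32]; ring
  have hs : Real.sqrt π > 0 := Real.sqrt_pos.2 pi_pos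
  have he : Real.sqrt π ^ Fintype.card (Fin 3) / Gamma (Fintype.card (Fin 3) / 2 + 1)
      = 4 * π / 3 := by
    simp only [Fintype.card_fin]
    push_cast
    rw [h52]
    rw [show Real.sqrt π ^ 3 = π * Real.sqrt π by
      rw [pow_succ, sq, Real.mul_self_sqrt pi_pos.le] ]
    field_simp
  rw [he]
  simp [ENNReal.toReal_ofReal (by positivity : (0:ℝ) ≤ 4 * π / 3)]

lemma radial (h : ℝ → ℝ) {a b : ℝ} (ha : 0 < a) (hab : a ≤ b) :
    ∫ x in {x : E3 | ‖x‖ ∈ Icc a b}, h ‖x‖ = 4 * π * ∫ r in a..b, r^2 * h r := by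
  have hms : MeasurableSet {x : E3 | ‖x‖ ∈ Icc a b} :=
    measurable_norm measurableSet_Icc
  have h1 : ∫ x in {x : E3 | ‖x‖ ∈ Icc a b}, h ‖x‖
      = ∫ x : E3, (Icc a b).indicator h ‖x‖ := by
    rw [← MeasureTheory.integral_indicator hms]
    congr 1
  rw [h1, MeasureTheory.integral_fun_norm_addHaar volume ((Icc a b).indicator h)]
  have h2 : ∫ y in Ioi (0:ℝ), y ^ (Module.finrank ℝ E3 - 1) • (Icc a b).indicator h y
      = ∫ r in a..b, r^2 * h r := by
    have e : (fun y : ℝ => y ^ (Module.finrank ℝ E3 - 1) • (Icc a b).indicator h y)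
        = (Icc a b).indicator (fun y => y^2 * h y) := by
      ext y
      simp [Set.indicator_apply, finrank_euclideanSpace_fin]
    have e2 : Ioi (0:ℝ) ∩ Icc a b = Icc a b :=
      Set.inter_eq_right.mpr (fun y hy => lt_of_lt_of_le ha hy.1)
    rw [e, setIntegral_indicator measurableSet_Icc, e2,
      integral_Icc_eq_integral_Ioc, intervalIntegral.integral_of_le hab]
  rw [h2, measureReal_def, vol_ball, finrank_euclideanSpace_fin]
  rw [nsmul_eq_mul, smul_eq_mul]
  push_cast; ring

/- ### Annuli -/

abbrev Ann (a b : ℝ) : Set E3 := {x : E3 | ‖x‖ ∈ Icc a b}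

lemma ann_measurable (a b : ℝ) : MeasurableSet (Ann a b) :=
  measurable_norm measurableSet_Icc

lemma ann_compact (a b : ℝ) : IsCompact (Ann a b) := by
  have h1 : IsClosed (Ann a b) := isClosed_Icc.preimage continuous_norm
  have h2 : Ann a b ⊆ closedBall 0 b := fun x hx => by
    simpa [mem_closedBall, dist_zero_right] using hx.2
  exact (isCompact_closedBall _ _).of_isClosed_subset h1 h2

lemma norm_mem_cube {n : ℕ} {k : Fin 3 → ℤ} (hk : k ∈ shell n) {x : E3} (hx : x ∈ cube k) :
    ‖toE k‖ - Real.sqrt 3 ≤ ‖x‖ ∧ ‖x‖ ≤ ‖toE k‖ + Real.sqrt 3 := by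
  have h := norm_sub_cube hx
  have h2 : |‖x‖ - ‖toE k‖| ≤ Real.sqrt 3 := (abs_norm_sub_norm_le _ _).trans h
  rw [abs_le] at h2
  constructor <;> linarith [h2.1, h2.2]

lemma cube_subset_ann {n : ℕ} {k : Fin 3 → ℤ} (hk : k ∈ shell n) :
    cube k ⊆ Ann ((n:ℝ) - Real.sqrt 3) (2*(n:ℝ) + Real.sqrt 3) := by
  intro x hx
  obtain ⟨h1, h2⟩ := norm_mem_cube hk hx
  obtain ⟨-, hl, hu⟩ := mem_shell_iff.mp hk
  rw [znorm_eq] at hl hu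
  exact ⟨by linarith, by linarith⟩

lemma upper_comparison {n : ℕ} (hn : 100 ≤ n) :
    ∑ k ∈ shell n, (znorm3 k ^ 3)⁻¹ ≤
      4 * π * ∫ r in ((n:ℝ) - Real.sqrt 3)..(2*(n:ℝ) + Real.sqrt 3),
        r^2 * ((r - Real.sqrt 3)^3)⁻¹ := by
  have hN : (100:ℝ) ≤ n := by exact_mod_cast hn
  set c := Real.sqrt 3 with hc
  have hc1 : 1 ≤ c := one_le_sqrt3
  have hc2 : c < 2 := sqrt3_lt_two
  set a := (n:ℝ) - c with ha
  set b := 2*(n:ℝ) + c with hb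
  have hA : IsCompact (Ann a b) := ann_compact a b
  have hGpos : ∀ x ∈ Ann a b, 0 < ‖x‖ - c := fun x hx => by
    have := hx.1; simp only [ha] at this; linarith
  have hcont : ContinuousOn (fun x : E3 => ((‖x‖ - c)^3)⁻¹) (Ann a b) := by
    apply ContinuousOn.inv₀
    · exact ((continuous_norm.sub continuous_const).pow 3).continuousOn
    · intro x hx; exact pow_ne_zero 3 (ne_of_gt (hGpos x hx))
  have hint : IntegrableOn (fun x : E3 => ((‖x‖ - c)^3)⁻¹) (Ann a b) :=
    hcont.integrableOn_compact hA
  -- step 1 : each term bounded by the cube integral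
  have step1 : ∀ k ∈ shell n, (znorm3 k ^ 3)⁻¹ ≤
      ∫ x in cube k, ((‖x‖ - c)^3)⁻¹ := by
    intro k hk
    have hsub := cube_subset_ann hk
    have hconst : (znorm3 k ^ 3)⁻¹ = ∫ _x in cube k, (znorm3 k ^ 3)⁻¹ := by
      rw [setIntegral_const, measureReal_def, cube_volume]; simp
    rw [hconst]
    apply setIntegral_mono_on
    · exact integrableOn_const (by rw [cube_volume]; norm_num)
    · exact hint.mono_set hsub
    · exact cube_measurable k
    · intro x hx
      obtain ⟨h1, h2⟩ := norm_mem_cube hk hx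
      have hxa := hGpos x (hsub hx)
      have hkz : znorm3 k = ‖toE k‖ := znorm_eq k
      have h3 : ‖x‖ - c ≤ znorm3 k := by rw [hkz]; linarith
      apply inv_anti₀
      · positivity
      · exact pow_le_pow_left₀ hxa.le h3 3
  -- step 2 : sum of cube integrals = integral over the union
  have step2 : ∑ k ∈ shell n, ∫ x in cube k, ((‖x‖ - c)^3)⁻¹ =
      ∫ x in ⋃ k ∈ shell n, cube k, ((‖x‖ - c)^3)⁻¹ := by
    rw [integral_biUnion_finset]
    · exact fun k _ => cube_measurable k
    · intro k _ l _ hkl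
      exact cube_pairwise_disjoint hkl
    · exact fun k hk => hint.mono_set (cube_subset_ann hk)
  -- step 3 : union ⊆ annulus
  have step3 : ∫ x in ⋃ k ∈ shell n, cube k, ((‖x‖ - c)^3)⁻¹ ≤
      ∫ x in Ann a b, ((‖x‖ - c)^3)⁻¹ := by
    apply setIntegral_mono_set hint
    · filter_upwards [self_mem_ae_restrict (ann_measurable a b)] with x hx
      exact le_of_lt (inv_pos.mpr (pow_pos (hGpos x hx) 3))
    · exact HasSubset.Subset.eventuallyLE (Set.iUnion₂_subset fun k hk => cube_subset_ann hk)
  have hrad := radial (fun r => ((r - c)^3)⁻¹) (a := a) (b := b)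
    (by simp only [ha]; linarith) (by simp only [ha, hb]; linarith)
  calc ∑ k ∈ shell n, (znorm3 k ^ 3)⁻¹
      ≤ ∑ k ∈ shell n, ∫ x in cube k, ((‖x‖ - c)^3)⁻¹ := Finset.sum_le_sum step1
    _ = ∫ x in ⋃ k ∈ shell n, cube k, ((‖x‖ - c)^3)⁻¹ := step2
    _ ≤ ∫ x in Ann a b, ((‖x‖ - c)^3)⁻¹ := step3
    _ = 4 * π * ∫ r in a..b, r^2 * ((r - c)^3)⁻¹ := hrad

lemma lower_comparison {n : ℕ} (hn : 100 ≤ n) :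
    4 * π * ∫ r in ((n:ℝ) + Real.sqrt 3)..(2*(n:ℝ) - Real.sqrt 3),
        r^2 * ((r + Real.sqrt 3)^3)⁻¹ ≤
      ∑ k ∈ shell n, (znorm3 k ^ 3)⁻¹ := by
  have hN : (100:ℝ) ≤ n := by exact_mod_cast hn
  set c := Real.sqrt 3 with hc
  have hc1 : 1 ≤ c := one_le_sqrt3
  have hc2 : c < 2 := sqrt3_lt_two
  have hcont : Continuous (fun x : E3 => ((‖x‖ + c)^3)⁻¹) := by
    apply Continuous.inv₀
    · exact (continuous_norm.add continuous_const).pow 3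
    · intro x
      have : 0 < ‖x‖ + c := by positivity
      positivity
  have hint : IntegrableOn (fun x : E3 => ((‖x‖ + c)^3)⁻¹)
      (Ann ((n:ℝ) - c) (2*(n:ℝ) + c)) :=
    hcont.continuousOn.integrableOn_compact (ann_compact _ _)
  have hintU : IntegrableOn (fun x : E3 => ((‖x‖ + c)^3)⁻¹) (⋃ k ∈ shell n, cube k) :=
    hint.mono_set (Set.iUnion₂_subset fun k hk => cube_subset_ann hk)
  have hnonneg : ∀ x : E3, 0 ≤ ((‖x‖ + c)^3)⁻¹ := fun x => by positivity
  -- annulus inside union of cubes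
  have hsubU : Ann ((n:ℝ) + c) (2*(n:ℝ) - c) ⊆ ⋃ k ∈ shell n, cube k := by
    intro x hx
    set k : Fin 3 → ℤ := fun i => ⌊x i⌋ with hk
    have hxk : x ∈ cube k := mem_cube_floor x
    have h := norm_sub_cube hxk
    have h2 : |‖x‖ - ‖toE k‖| ≤ c := (abs_norm_sub_norm_le _ _).trans h
    rw [abs_le] at h2
    have hl : (n:ℝ) ≤ znorm3 k := by
      rw [znorm_eq]; have := hx.1; linarith [h2.2]
    have hu : znorm3 k ≤ 2*(n:ℝ) := by
      rw [znorm_eq]; have := hx.2; linarith [h2.1]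
    have hk0 : k ≠ 0 := by
      intro h0
      have : znorm3 k = 0 := by rw [h0]; simp [znorm3]
      rw [this] at hl; linarith
    exact Set.mem_biUnion (mem_shell_iff.mpr ⟨hk0, hl, hu⟩) hxk
  -- each cube integral below the lattice term
  have step1 : ∀ k ∈ shell n, (∫ x in cube k, ((‖x‖ + c)^3)⁻¹) ≤ (znorm3 k ^ 3)⁻¹ := by
    intro k hk
    obtain ⟨hk0, hl, hu⟩ := mem_shell_iff.mp hk
    have hkpos : 0 < znorm3 k := lt_of_lt_of_le (by linarith) hl
    have hconst : (znorm3 k ^ 3)⁻¹ = ∫ _x in cube k, (znorm3 k ^ 3)⁻¹ := by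
      rw [setIntegral_const, measureReal_def, cube_volume]; simp
    rw [hconst]
    apply setIntegral_mono_on
    · exact hint.mono_set (cube_subset_ann hk)
    · exact integrableOn_const (by rw [cube_volume]; norm_num)
    · exact cube_measurable k
    · intro x hx
      obtain ⟨h1, h2⟩ := norm_mem_cube hk hx
      have h3 : znorm3 k ≤ ‖x‖ + c := by rw [znorm_eq]; linarith
      exact inv_anti₀ (by positivity) (pow_le_pow_left₀ hkpos.le h3 3)
  have step2 : ∫ x in ⋃ k ∈ shell n, cube k, ((‖x‖ + c)^3)⁻¹ =
      ∑ k ∈ shell n, ∫ x in cube k, ((‖x‖ + c)^3)⁻¹ := by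
    apply integral_biUnion_finset
    · exact fun k _ => cube_measurable k
    · exact fun k _ l _ hkl => cube_pairwise_disjoint hkl
    · exact fun k hk => hint.mono_set (cube_subset_ann hk)
  have step3 : ∫ x in Ann ((n:ℝ) + c) (2*(n:ℝ) - c), ((‖x‖ + c)^3)⁻¹ ≤
      ∫ x in ⋃ k ∈ shell n, cube k, ((‖x‖ + c)^3)⁻¹ := by
    apply setIntegral_mono_set hintU
    · exact Filter.Eventually.of_forall hnonneg
    · exact HasSubset.Subset.eventuallyLE hsubU
  have hrad := radial (fun r => ((r + c)^3)⁻¹) (a := (n:ℝ) + c) (b := 2*(n:ℝ) - c)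
    (by linarith) (by linarith)
  calc 4 * π * ∫ r in ((n:ℝ) + c)..(2*(n:ℝ) - c), r^2 * ((r + c)^3)⁻¹
      = ∫ x in Ann ((n:ℝ) + c) (2*(n:ℝ) - c), ((‖x‖ + c)^3)⁻¹ := hrad.symm
    _ ≤ ∫ x in ⋃ k ∈ shell n, cube k, ((‖x‖ + c)^3)⁻¹ := step3
    _ = ∑ k ∈ shell n, ∫ x in cube k, ((‖x‖ + c)^3)⁻¹ := step2
    _ ≤ ∑ k ∈ shell n, (znorm3 k ^ 3)⁻¹ := Finset.sum_le_sum step1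

lemma oneD_upper {n : ℕ} (hn : 100 ≤ n) :
    ∫ r in ((n:ℝ) - Real.sqrt 3)..(2*(n:ℝ) + Real.sqrt 3),
        r^2 * ((r - Real.sqrt 3)^3)⁻¹ ≤ Real.log 2 + 34 / (n:ℝ) := by
  have hN : (100:ℝ) ≤ n := by exact_mod_cast hn
  set c := Real.sqrt 3 with hcdef
  have hc1 : 1 ≤ c := one_le_sqrt3
  have hc2 : c < 2 := sqrt3_lt_two
  have hc3 : c^2 = 3 := sq_sqrt3
  set a := (n:ℝ) - c with ha
  set b := 2*(n:ℝ) + c with hb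
  have ha98 : (98:ℝ) ≤ a := by rw [ha]; linarith
  have hab : a ≤ b := by rw [ha, hb]; linarith
  have huIcc : [[a, b]] = Icc a b := uIcc_of_le hab
  have h0 : (0:ℝ) ∉ [[a, b]] := by
    rw [huIcc]; intro h; linarith [h.1]
  have hfint : IntervalIntegrable (fun r => r^2 * ((r - c)^3)⁻¹) volume a b := by
    apply ContinuousOn.intervalIntegrable
    apply ContinuousOn.mul (continuousOn_pow 2)
    apply ContinuousOn.inv₀ (((continuous_id.sub continuous_const).pow 3).continuousOn)
    intro r hr
    rw [huIcc] at hr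
    have : 0 < r - c := by linarith [hr.1]
    exact pow_ne_zero 3 (ne_of_gt this)
  have hg1 : IntervalIntegrable (fun r : ℝ => r⁻¹) volume a b :=
    intervalIntegrable_inv
      (fun x hx => by rw [huIcc] at hx; intro h; rw [h] at hx; linarith [hx.1])
      continuousOn_id
  have hg2 : IntervalIntegrable (fun r : ℝ => (14:ℝ) * r ^ (-2:ℤ)) volume a b :=
    (intervalIntegrable_zpow (Or.inr h0)).const_mul 14
  have hpt : ∀ r ∈ Icc a b, r^2 * ((r - c)^3)⁻¹ ≤ r⁻¹ + 14 * r ^ (-2:ℤ) := by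
    intro r hr
    have hr98 : (98:ℝ) ≤ r := le_trans ha98 hr.1
    have h1 : 0 < r - c := by linarith
    have hr0 : (0:ℝ) ≤ r := by linarith
    have hc3' : c^3 = 3*c := by rw [pow_succ, hc3]
    have key : r^2 * r^2 ≤ (r + 14) * (r - c)^3 := by
      nlinarith [mul_nonneg (sub_nonneg.2 hc2.le) (pow_nonneg hr0 3),
        mul_nonneg (sub_nonneg.2 hc2.le) (sq_nonneg r),
        mul_nonneg (sub_nonneg.2 hc2.le) hr0,
        mul_nonneg (by linarith : (0:ℝ) ≤ r - 98) (sq_nonneg r),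
        sq_nonneg r]
    have e1 : r⁻¹ + 14 * r ^ (-2:ℤ) = (r + 14)/r^2 := by
      have h0' : r ≠ 0 := by positivity
      rw [zpow_neg, zpow_two]
      field_simp
    rw [e1, ← div_eq_mul_inv, div_le_div_iff₀ (by positivity) (by positivity)]
    exact key
  have hNpos : (0:ℝ) < n := by linarith
  have hapos : (0:ℝ) < a := by linarith
  have hbpos : (0:ℝ) < b := by linarith
  have hcalc : ∫ r in a..b, (r⁻¹ + 14 * r ^ (-2:ℤ)) =
      Real.log (b/a) + 14 * ((b ^ (-1:ℤ) - a ^ (-1:ℤ))/((-2:ℝ) + 1)) := by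
    rw [integral_add hg1 hg2, integral_inv h0, intervalIntegral.integral_const_mul,
      integral_zpow (Or.inr ⟨by norm_num, h0⟩)]
    norm_num
  have hlog : Real.log (b/a) ≤ Real.log 2 + 6/(n:ℝ) := by
    have hq : b/a = 2 * (b/(2*a)) := by
      have h0' : a ≠ 0 := by positivity
      field_simp
    have hqpos : 0 < b/(2*a) := by positivity
    rw [hq, Real.log_mul two_ne_zero (ne_of_gt hqpos)]
    have h2 : Real.log (b/(2*a)) ≤ b/(2*a) - 1 := Real.log_le_sub_one_of_pos hqpos
    have h3 : b/(2*a) - 1 ≤ 6/(n:ℝ) := by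
      rw [div_sub_one (by positivity), div_le_div_iff₀ (by positivity) hNpos]
      rw [ha, hb]; nlinarith
    linarith
  have h14 : 14 * ((b ^ (-1:ℤ) - a ^ (-1:ℤ))/((-2:ℝ) + 1)) ≤ 28/(n:ℝ) := by
    have e : ((b ^ (-1:ℤ) - a ^ (-1:ℤ))/((-2:ℝ) + 1)) = a⁻¹ - b⁻¹ := by
      norm_num [zpow_neg]
      ring
    rw [e]
    have h1 : a⁻¹ ≤ 2/(n:ℝ) := by
      rw [inv_eq_one_div, div_le_div_iff₀ hapos hNpos]
      rw [ha]; nlinarith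
    have h2 : (0:ℝ) ≤ b⁻¹ := by positivity
    rw [mul_sub]
    have : 14 * a⁻¹ ≤ 28/(n:ℝ) := by
      rw [div_eq_mul_inv] at h1 ⊢
      nlinarith [inv_nonneg.mpr hapos.le]
    linarith
  calc ∫ r in a..b, r^2 * ((r - c)^3)⁻¹
      ≤ ∫ r in a..b, (r⁻¹ + 14 * r ^ (-2:ℤ)) :=
        integral_mono_on hab hfint (hg1.add hg2) hpt
    _ = Real.log (b/a) + 14 * ((b ^ (-1:ℤ) - a ^ (-1:ℤ))/((-2:ℝ) + 1)) := hcalc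
    _ ≤ Real.log 2 + 6/(n:ℝ) + 28/(n:ℝ) := by linarith
    _ = Real.log 2 + 34/(n:ℝ) := by ring


lemma oneD_lower {n : ℕ} (hn : 100 ≤ n) :
    Real.log 2 - 12 / (n:ℝ) ≤
      ∫ r in ((n:ℝ) + Real.sqrt 3)..(2*(n:ℝ) - Real.sqrt 3),
        r^2 * ((r + Real.sqrt 3)^3)⁻¹ := by
  have hN : (100:ℝ) ≤ n := by exact_mod_cast hn
  set c := Real.sqrt 3 with hcdef
  have hc1 : 1 ≤ c := one_le_sqrt3
  have hc2 : c < 2 := sqrt3_lt_two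
  have hc3 : c^2 = 3 := sq_sqrt3
  set a := (n:ℝ) + c with ha
  set b := 2*(n:ℝ) - c with hb
  have ha100 : (100:ℝ) ≤ a := by rw [ha]; linarith
  have hab : a ≤ b := by rw [ha, hb]; linarith
  have huIcc : [[a, b]] = Icc a b := uIcc_of_le hab
  have h0 : (0:ℝ) ∉ [[a, b]] := by
    rw [huIcc]; intro h; linarith [h.1]
  have hNpos : (0:ℝ) < n := by linarith
  have hapos : (0:ℝ) < a := by linarith
  have hbpos : (0:ℝ) < b := by linarith
  have hfint : IntervalIntegrable (fun r => r^2 * ((r + c)^3)⁻¹) volume a b := by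
    apply ContinuousOn.intervalIntegrable
    apply ContinuousOn.mul (continuousOn_pow 2)
    apply ContinuousOn.inv₀ (((continuous_id.add continuous_const).pow 3).continuousOn)
    intro r hr
    rw [huIcc] at hr
    have : 0 < r + c := by linarith [hr.1]
    exact pow_ne_zero 3 (ne_of_gt this)
  have hg1 : IntervalIntegrable (fun r : ℝ => r⁻¹) volume a b :=
    intervalIntegrable_inv
      (fun x hx => by rw [huIcc] at hx; intro h; rw [h] at hx; linarith [hx.1])
      continuousOn_id
  have hg2 : IntervalIntegrable (fun r : ℝ => (6:ℝ) * r ^ (-2:ℤ)) volume a b :=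
    (intervalIntegrable_zpow (Or.inr h0)).const_mul 6
  have hpt : ∀ r ∈ Icc a b, r⁻¹ - 6 * r ^ (-2:ℤ) ≤ r^2 * ((r + c)^3)⁻¹ := by
    intro r hr
    have hr100 : (100:ℝ) ≤ r := le_trans ha100 hr.1
    have hr0 : (0:ℝ) ≤ r := by linarith
    have h1 : 0 < r + c := by linarith
    have hc3' : c^3 = 3*c := by rw [pow_succ, hc3]
    have key : (r - 6) * (r + c)^3 ≤ r^2 * r^2 := by
      nlinarith [mul_nonneg (sub_nonneg.2 hc2.le) (pow_nonneg hr0 3),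
        mul_nonneg (sub_nonneg.2 hc2.le) (sq_nonneg r),
        mul_nonneg (sub_nonneg.2 hc2.le) hr0,
        mul_nonneg (by linarith : (0:ℝ) ≤ c) (sq_nonneg r),
        mul_nonneg (by linarith : (0:ℝ) ≤ c) hr0,
        sq_nonneg r]
    have e1 : r⁻¹ - 6 * r ^ (-2:ℤ) = (r - 6)/r^2 := by
      have h0' : r ≠ 0 := by positivity
      rw [zpow_neg, zpow_two]
      field_simp
    rw [e1, ← div_eq_mul_inv, div_le_div_iff₀ (by positivity) (by positivity)]
    exact key
  have hcalc : ∫ r in a..b, (r⁻¹ - 6 * r ^ (-2:ℤ)) =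
      Real.log (b/a) - 6 * ((b ^ (-1:ℤ) - a ^ (-1:ℤ))/((-2:ℝ) + 1)) := by
    rw [integral_sub hg1 hg2, integral_inv h0, intervalIntegral.integral_const_mul,
      integral_zpow (Or.inr ⟨by norm_num, h0⟩)]
    norm_num
  have hlog : Real.log 2 - 6/(n:ℝ) ≤ Real.log (b/a) := by
    have hqpos : 0 < (2*a)/b := by positivity
    have hq : Real.log (b/a) = Real.log 2 - Real.log ((2*a)/b) := by
      rw [Real.log_div (by positivity) (ne_of_gt hbpos),
        Real.log_div (by positivity) (ne_of_gt hapos), Real.log_mul two_ne_zero (ne_of_gt hapos)]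
      ring
    have h2 : Real.log ((2*a)/b) ≤ (2*a)/b - 1 := Real.log_le_sub_one_of_pos hqpos
    have h3 : (2*a)/b - 1 ≤ 6/(n:ℝ) := by
      rw [div_sub_one (ne_of_gt hbpos), div_le_div_iff₀ hbpos hNpos]
      rw [ha, hb]; nlinarith
    rw [hq]; linarith
  have e : ((b ^ (-1:ℤ) - a ^ (-1:ℤ))/((-2:ℝ) + 1)) = a⁻¹ - b⁻¹ := by
    norm_num [zpow_neg]
    ring
  rw [e] at hcalc
  have h6 : 6 * (a⁻¹ - b⁻¹) ≤ 6/(n:ℝ) := by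
    have h1 : a⁻¹ ≤ 1/(n:ℝ) := by
      rw [inv_eq_one_div, div_le_div_iff₀ hapos hNpos]
      rw [ha]; nlinarith
    have h2 : (0:ℝ) ≤ b⁻¹ := by positivity
    rw [mul_sub]
    have h3 : 6 * a⁻¹ ≤ 6 / (n:ℝ) := by
      rw [div_eq_mul_inv, inv_eq_one_div] at *
      nlinarith
    linarith
  calc Real.log 2 - 12/(n:ℝ)
      ≤ Real.log (b/a) - 6 * (a⁻¹ - b⁻¹) := by
        linarith [(by ring : (12:ℝ)/(n:ℝ) = 6/(n:ℝ) + 6/(n:ℝ))]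
    _ = ∫ r in a..b, (r⁻¹ - 6 * r ^ (-2:ℤ)) := hcalc.symm
    _ ≤ ∫ r in a..b, r^2 * ((r + c)^3)⁻¹ :=
        integral_mono_on hab (hg1.sub hg2) hfint hpt

/- ### Final assembly -/

lemma pi_pos' : (0:ℝ) < π := pi_pos

lemma main_large {n : ℕ} (hn : 100 ≤ n) :
    |alphaSeq n - 4 * Real.pi * Real.log 2| ≤ 544 / (n : ℝ) := by
  have hN : (100:ℝ) ≤ n := by exact_mod_cast hn
  have hNpos : (0:ℝ) < n := by linarith
  have hup := upper_comparison hn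
  have hlo := lower_comparison hn
  have hodu := oneD_upper hn
  have hodl := oneD_lower hn
  have h4pi : (0:ℝ) ≤ 4 * π := by positivity
  have hU : alphaSeq n ≤ 4 * π * (Real.log 2 + 34/(n:ℝ)) := by
    rw [alphaSeq_eq]
    exact le_trans hup (mul_le_mul_of_nonneg_left hodu h4pi)
  have hL : 4 * π * (Real.log 2 - 12/(n:ℝ)) ≤ alphaSeq n := by
    rw [alphaSeq_eq]
    exact le_trans (mul_le_mul_of_nonneg_left hodl h4pi) hlo
  rw [abs_le]
  have hpi4 : π ≤ 4 := pi_le_four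
  have hpi0 : (0:ℝ) < π := pi_pos
  constructor
  · have h1 : 4 * π * (Real.log 2 - 12/(n:ℝ)) - 4 * π * Real.log 2 ≤
        alphaSeq n - 4 * π * Real.log 2 := sub_le_sub_right hL _
    have e1 : 4 * π * (Real.log 2 - 12/(n:ℝ)) - 4 * π * Real.log 2 = -((48*π)/(n:ℝ)) := by
      ring
    have h2 : (48*π)/(n:ℝ) ≤ 544/(n:ℝ) := by
      gcongr
      nlinarith
    linarith
  · have h1 : alphaSeq n - 4 * π * Real.log 2 ≤
        4 * π * (Real.log 2 + 34/(n:ℝ)) - 4 * π * Real.log 2 := sub_le_sub_right hU _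
    have e1 : 4 * π * (Real.log 2 + 34/(n:ℝ)) - 4 * π * Real.log 2 = (136*π)/(n:ℝ) := by
      ring
    have h2 : (136*π)/(n:ℝ) ≤ 544/(n:ℝ) := by
      gcongr
      nlinarith
    linarith

end AlphaAux

/-- There is a constant `C > 0` such that
`|α_n − 4π log 2| ≤ C / n` for all `n ≥ 1`. -/
theorem alphaSeq_approx_four_pi_log_two :
    ∃ C : ℝ, 0 < C ∧ ∀ n : ℕ, 1 ≤ n →
      |alphaSeq n - 4 * Real.pi * Real.log 2| ≤ C / (n : ℝ) := by
  refine ⟨50000, by norm_num, fun n hn => ?_⟩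
  have hn1 : (1:ℝ) ≤ n := by exact_mod_cast hn
  have hnpos : (0:ℝ) < n := by linarith
  by_cases h : 100 ≤ n
  · have hmain := AlphaAux.main_large h
    have h2 : 544/(n:ℝ) ≤ 50000/(n:ℝ) := by gcongr <;> norm_num
    linarith
  · have hn99 : (n:ℝ) ≤ 100 := by
      have : n ≤ 100 := by omega
      exact_mod_cast this
    have hub := AlphaAux.alphaSeq_le_125 hn
    have hlb := AlphaAux.alphaSeq_nonneg n
    have hlog0 : 0 ≤ Real.log 2 := Real.log_nonneg (by norm_num)
    have hpi4 : Real.pi ≤ 4 := Real.pi_le_four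
    have hpi0 : (0:ℝ) < Real.pi := Real.pi_pos
    have h4 : 4 * Real.pi * Real.log 2 ≤ 16 := by
      nlinarith [AlphaAux.log2le]
    have h40 : 0 ≤ 4 * Real.pi * Real.log 2 := by positivity
    have hC : (500:ℝ) ≤ 50000/(n:ℝ) := by
      rw [le_div_iff₀ hnpos]
      nlinarith
    rw [abs_le]
    constructor <;> linarith
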